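/- Let f be analytic on the unit disk with f(0) = 0, f'(0) = 1, and suppose Re(zf'(z)/f(z)) > 1 + L₀ for all z ∈ 𝔻, where L₀ < 0. Then the function φ(z) = ∫₀ᶻ (f(t)/t)^{-1/L₀} dt satisfies Re(1 + zφ''(z)/φ'(z)) > 0 for all z ∈ 𝔻, i.e. φ is convex. -/

import Mathlib

open Complex Metric Set Filter

theorem convexity_of_integral_transform (L₀ : ℝ) (hL₀ : L₀ < 0) (f φ : ℂ → ℂ)
    (hf : DifferentiableOn ℂ f (ball (0 : ℂ) 1)) (hf0 : f 0 = 0) (hf'0 : deriv f 0 = 1)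
    (hfne : ∀ z ∈ ball (0 : ℂ) 1, z ≠ 0 → f z / z ≠ 0)
    (hre : ∀ z ∈ ball (0 : ℂ) 1, z ≠ 0 → 1 + L₀ < (z * deriv f z / f z).re)
    (hφ : DifferentiableOn ℂ φ (ball (0 : ℂ) 1)) (hφ0 : φ 0 = 0)
    (hφ' : ∀ z ∈ ball (0 : ℂ) 1, z ≠ 0 →
      deriv φ z = (f z / z) ^ ((-(1 / L₀) : ℝ) : ℂ)) :
    ∀ z ∈ ball (0 : ℂ) 1, 0 < (1 + z * deriv (deriv φ) z / deriv φ z).re := by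
  set c : ℝ := -(1 / L₀) with hc
  have hL0ne : L₀ ≠ 0 := ne_of_lt hL₀
  have hc0 : (0 : ℝ) < c := by
    have : 1 / L₀ < 0 := div_neg_of_pos_of_neg one_pos hL₀
    simpa [hc] using neg_pos.mpr this
  have hball : IsOpen (ball (0 : ℂ) 1) := isOpen_ball
  set g : ℂ → ℂ := deriv φ with hg
  have hφA : AnalyticOnNhd ℂ φ (ball 0 1) := hφ.analyticOnNhd hball
  have hgA : AnalyticOnNhd ℂ g (ball 0 1) := hφA.deriv
  have hfA : AnalyticOnNhd ℂ f (ball 0 1) := hf.analyticOnNhd hball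
  -- the open punctured ball
  set U : Set ℂ := ball (0 : ℂ) 1 \ {0} with hU
  have hUopen : IsOpen U := hball.sdiff isClosed_singleton
  -- the two analytic functions
  set A : ℂ → ℂ := fun z => deriv g z * f z * z with hA
  set B : ℂ → ℂ := fun z => (c : ℂ) * (deriv f z * z - f z) * g z with hB
  have hAA : AnalyticOnNhd ℂ A (ball 0 1) :=
    (hgA.deriv.mul hfA).mul analyticOnNhd_id
  have hBB : AnalyticOnNhd ℂ B (ball 0 1) :=
    ((analyticOnNhd_const.mul ((hfA.deriv.mul analyticOnNhd_id).sub hfA))).mul hgA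
  -- the open set where we can compute derivatives of the cpow
  set V : Set ℂ := {z | z ∈ U ∧ f z / z ∈ Complex.slitPlane} with hV
  have hVopen : IsOpen V := by
    have hcont : ContinuousOn (fun z => f z / z) U := by
      apply ContinuousOn.div
      · exact (hf.continuousOn).mono diff_subset
      · exact continuousOn_id
      · intro z hz; exact hz.2
    have h := hcont.isOpen_inter_preimage hUopen Complex.isOpen_slitPlane
    have hVeq : V = U ∩ (fun z => f z / z) ⁻¹' Complex.slitPlane := by
      ext z; simp [hV, Set.mem_inter_iff]
    rw [hVeq]; exact h
  -- A = B on V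
  have hAB : ∀ z ∈ V, A z = B z := by
    rintro z ⟨⟨hz, hz0'⟩, hsp⟩
    have hz0 : z ≠ 0 := by simpa using hz0'
    have hfz : f z / z ≠ 0 := hfne z hz hz0
    have hfzne : f z ≠ 0 := fun h => hfz (by simp [h])
    have hfd : HasDerivAt f (deriv f z) z :=
      (hf.differentiableAt (hball.mem_nhds hz)).hasDerivAt
    have hhd : HasDerivAt (fun w => f w / w)
        ((deriv f z * z - f z * 1) / z ^ 2) z := hfd.div (hasDerivAt_id z) hz0
    have hcp : HasDerivAt (fun w => (f w / w) ^ ((c : ℝ) : ℂ))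
        (((c : ℝ) : ℂ) * (f z / z) ^ (((c : ℝ) : ℂ) - 1) *
          ((deriv f z * z - f z * 1) / z ^ 2)) z := hhd.cpow_const hsp
    have hev : g =ᶠ[nhds z] fun w => (f w / w) ^ ((c : ℝ) : ℂ) := by
      filter_upwards [hUopen.mem_nhds ⟨hz, hz0'⟩] with w hw
      exact hφ' w hw.1 (by simpa using hw.2)
    have hgd : HasDerivAt g
        (((c : ℝ) : ℂ) * (f z / z) ^ (((c : ℝ) : ℂ) - 1) *
          ((deriv f z * z - f z * 1) / z ^ 2)) z := hcp.congr_of_eventuallyEq hev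
    have hderiv : deriv g z = ((c : ℝ) : ℂ) * (f z / z) ^ (((c : ℝ) : ℂ) - 1) *
          ((deriv f z * z - f z * 1) / z ^ 2) := hgd.deriv
    have hgz : g z = (f z / z) ^ ((c : ℝ) : ℂ) := hφ' z hz hz0
    have hpow : (f z / z) ^ ((c : ℝ) : ℂ)
        = (f z / z) ^ (((c : ℝ) : ℂ) - 1) * (f z / z) := by
      have h1 := Complex.cpow_add (x := f z / z) (((c : ℝ) : ℂ) - 1) 1 hfz
      rw [sub_add_cancel, Complex.cpow_one] at h1
      exact h1
    simp only [hA, hB, hderiv, hgz, hpow]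
    field_simp
  -- V is nonempty : points near 0 are in V
  have hslope : Tendsto (fun z : ℂ => f z / z) (nhdsWithin 0 {(0:ℂ)}ᶜ) (nhds 1) := by
    have hd0 : HasDerivAt f 1 0 := by
      have hdiff : DifferentiableAt ℂ f 0 :=
        hf.differentiableAt (hball.mem_nhds (show (0:ℂ) ∈ ball (0:ℂ) 1 by simp))
      have h := hdiff.hasDerivAt
      rwa [hf'0] at h
    have := hasDerivAt_iff_tendsto_slope.mp hd0
    refine this.congr' ?_
    filter_upwards [self_mem_nhdsWithin] with w hw
    simp only [Set.mem_compl_iff, Set.mem_singleton_iff] at hw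
    simp [slope, hf0, div_eq_inv_mul]
  have hVne : ∃ z₁, z₁ ∈ V := by
    have h1 : ∀ᶠ w in nhdsWithin (0:ℂ) {(0:ℂ)}ᶜ, f w / w ∈ Complex.slitPlane := by
      have : Complex.slitPlane ∈ nhds (1 : ℂ) :=
        Complex.isOpen_slitPlane.mem_nhds (by simp [Complex.mem_slitPlane_iff])
      exact hslope this
    have h2' : ball (0:ℂ) 1 ∈ nhds (0:ℂ) := hball.mem_nhds (by simp)
    have h2 : ∀ᶠ w in nhdsWithin (0:ℂ) {(0:ℂ)}ᶜ, w ∈ ball (0:ℂ) 1 :=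
      eventually_nhdsWithin_of_eventually_nhds
        (Filter.eventually_of_mem h2' (fun x hx => hx))
    have h3 : ∀ᶠ w in nhdsWithin (0:ℂ) {(0:ℂ)}ᶜ, w ∈ V := by
      filter_upwards [h1, h2, self_mem_nhdsWithin] with w hw1 hw2 hw3
      exact ⟨⟨hw2, hw3⟩, hw1⟩
    have : (nhdsWithin (0:ℂ) {(0:ℂ)}ᶜ).NeBot := inferInstance
    exact h3.exists
  obtain ⟨z₁, hz₁⟩ := hVne
  -- identity theorem
  have hEq : Set.EqOn A B (ball 0 1) := by
    apply hAA.eqOn_of_preconnected_of_eventuallyEq hBB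
      (convex_ball (0:ℂ) 1).isPreconnected hz₁.1.1
    filter_upwards [hVopen.mem_nhds hz₁] with w hw
    exact hAB w hw
  -- conclude
  intro z hz
  by_cases hz0 : z = 0
  · simp [hz0]
  · have hfz : f z / z ≠ 0 := hfne z hz hz0
    have hfzne : f z ≠ 0 := fun h => hfz (by simp [h])
    have hgz : g z ≠ 0 := by
      rw [hφ' z hz hz0]
      simp [Complex.cpow_eq_zero_iff, hfz]
    have hid := hEq hz
    simp only [hA, hB] at hid
    have key : z * deriv g z / g z = (c : ℂ) * (z * deriv f z / f z) - (c : ℂ) := by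
      field_simp
      linear_combination hid
    have hw := hre z hz hz0
    rw [key]
    have hre' : ((1 : ℂ) + ((c : ℂ) * (z * deriv f z / f z) - (c : ℂ))).re
        = 1 + c * (z * deriv f z / f z).re - c := by
      simp [Complex.add_re, Complex.sub_re, Complex.re_ofReal_mul]
      ring
    rw [hre']
    have hcL : c * L₀ = -1 := by rw [hc, neg_mul, one_div, inv_mul_cancel₀ hL0ne]
    have h5 : c * (1 + L₀) < c * ((z * deriv f z / f z).re) :=
      mul_lt_mul_of_pos_left hw hc0
    have h6 : c * (1 + L₀) = c - 1 := by rw [mul_add, mul_one, hcL]; ring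
    clear_value c
    linarith
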